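/- (Theorem 3.2, expected generalization bound.) Let ξ₁,…,ξ_N be i.i.d. samples from P*, P̂_N their empirical measure, τ_ε := (1+ε)·inf_{x∈𝒳} E_{P̂_N}[h(x,ξ)] (a.s. finite), and (x̂_N, k̂_N) a random pair that is a.s. RS-feasible for τ_ε with respect to P̂_N. Suppose that for constants c₁, c₂ > 0, a > 1 and p := max(m,2), the random variable D := d_W(P*, P̂_N) satisfies P{D ≥ r} ≤ c₁·exp(−c₂·N·r^p) for r ∈ (0,1] and P{D ≥ r} ≤ c₁·exp(−c₂·N·r^a) for r > 1. Then, with J* := inf_{x∈𝒳} E_{P*}[h(x,ξ)] assumed finite, E[ E_{P*}[h(x̂_N,ξ)] − J* ] ≤ ε·J* + (2+ε)·L·( C_p·N^{−1/p} + C_a·N^{−1/a} ), where C_p = ∫₀^∞ c₁ e^{−c₂ t^p} dt and C_a = ∫₀^∞ c₁ e^{−c₂ t^a} dt, and the outer expectation is over the sample data. -/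

import Mathlib

open MeasureTheory

noncomputable section

abbrev Vec (m : ℕ) := EuclideanSpace ℝ (Fin m)

/-- A coupling of two Borel probability measures on `Vec m`. -/
def IsCoupling {m : ℕ} (γ : Measure (Vec m × Vec m)) (P Q : Measure (Vec m)) : Prop :=
  IsProbabilityMeasure γ ∧ γ.map Prod.fst = P ∧ γ.map Prod.snd = Q

/-- Type-1 Wasserstein distance: infimum of `∫ ‖ξ₁ - ξ₂‖₂ dγ` over couplings `γ`. -/
noncomputable def wDist {m : ℕ} (P Q : Measure (Vec m)) : ℝ :=
  sInf {c : ℝ | ∃ γ : Measure (Vec m × Vec m), IsCoupling γ P Q ∧ c = ∫ p, ‖p.1 - p.2‖ ∂γ}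

/-- `(x, k)` is RS-feasible for reference value `τ` with respect to `Phat`. -/
def RSFeasible {m : ℕ} {X : Type*} (h : X → Vec m → ℝ)
    (Phat : Measure (Vec m)) (τ : ℝ) (x : X) (k : ℝ) : Prop :=
  0 ≤ k ∧ ∀ P : Measure (Vec m), IsProbabilityMeasure P →
    Integrable (fun ξ => ‖ξ‖) P → (∫ ξ, h x ξ ∂P) - τ ≤ k * wDist P Phat

/-- Empirical measure `(1/N) ∑ δ_{x i}`. -/
noncomputable def empMeas {m N : ℕ} (xs : Fin N → Vec m) : Measure (Vec m) :=
  (N : ENNReal)⁻¹ • ∑ i : Fin N, Measure.dirac (xs i)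

section AuxLemmas
open Set

lemma wDist_nonneg {m : ℕ} (P Q : Measure (Vec m)) : 0 ≤ wDist P Q :=
  Real.sInf_nonneg (fun c hc => by
    obtain ⟨γ, _, rfl⟩ := hc
    exact integral_nonneg fun p => norm_nonneg _)

lemma wDist_self {m : ℕ} (P : Measure (Vec m)) [IsProbabilityMeasure P] : wDist P P = 0 := by
  refine le_antisymm ?_ (wDist_nonneg P P)
  have hmd : Measurable fun ξ : Vec m => (ξ, ξ) := measurable_id.prodMk measurable_id
  refine csInf_le ⟨0, fun c hc => ?_⟩ ?_
  · obtain ⟨γ, _, rfl⟩ := hc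
    exact integral_nonneg fun p => norm_nonneg _
  · refine ⟨P.map (fun ξ => (ξ, ξ)), ⟨Measure.isProbabilityMeasure_map hmd.aemeasurable, ?_, ?_⟩, ?_⟩
    · rw [Measure.map_map measurable_fst hmd]; exact Measure.map_id
    · rw [Measure.map_map measurable_snd hmd]; exact Measure.map_id
    · rw [integral_map (f := fun p : Vec m × Vec m => ‖p.1 - p.2‖) hmd.aemeasurable
        ((continuous_fst.sub continuous_snd).norm.aestronglyMeasurable)]
      simp

lemma wasserstein_transfer {m : ℕ} (f : Vec m → ℝ) (L : ℝ) (hL : 0 ≤ L)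
    (hLip : ∀ ξ η, |f ξ - f η| ≤ L * ‖ξ - η‖)
    (P Q : Measure (Vec m)) [IsProbabilityMeasure P] [IsProbabilityMeasure Q]
    (hP : Integrable (fun ξ => ‖ξ‖) P) (hQ : Integrable (fun ξ => ‖ξ‖) Q)
    (hfP : Integrable f P) (hfQ : Integrable f Q) :
    |(∫ ξ, f ξ ∂P) - ∫ ξ, f ξ ∂Q| ≤ L * wDist P Q := by
  have hcont : Continuous f := by
    have : LipschitzWith (Real.toNNReal L) f :=
      LipschitzWith.of_dist_le_mul (fun ξ η => by
        rw [Real.dist_eq, Real.coe_toNNReal L hL, dist_eq_norm]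
        exact hLip ξ η)
    exact this.continuous
  set S := {c : ℝ | ∃ γ : Measure (Vec m × Vec m), IsCoupling γ P Q ∧ c = ∫ p, ‖p.1 - p.2‖ ∂γ}
    with hS
  -- per coupling bound
  have key : ∀ c ∈ S, |(∫ ξ, f ξ ∂P) - ∫ ξ, f ξ ∂Q| ≤ L * c := by
    rintro c ⟨γ, ⟨hγp, hγ1, hγ2⟩, rfl⟩
    haveI := hγp
    have i1 : Integrable (fun p : Vec m × Vec m => f p.1) γ := by
      have h0 : Integrable f (γ.map Prod.fst) := hγ1 ▸ hfP
      exact (integrable_map_measure hcont.aestronglyMeasurable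
        measurable_fst.aemeasurable).mp h0
    have i2 : Integrable (fun p : Vec m × Vec m => f p.2) γ := by
      have h0 : Integrable f (γ.map Prod.snd) := hγ2 ▸ hfQ
      exact (integrable_map_measure hcont.aestronglyMeasurable
        measurable_snd.aemeasurable).mp h0
    have in1 : Integrable (fun p : Vec m × Vec m => ‖p.1‖) γ := by
      have h0 : Integrable (fun ξ : Vec m => ‖ξ‖) (γ.map Prod.fst) := hγ1 ▸ hP
      exact (integrable_map_measure continuous_norm.aestronglyMeasurable
        measurable_fst.aemeasurable).mp h0
    have in2 : Integrable (fun p : Vec m × Vec m => ‖p.2‖) γ := by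
      have h0 : Integrable (fun ξ : Vec m => ‖ξ‖) (γ.map Prod.snd) := hγ2 ▸ hQ
      exact (integrable_map_measure continuous_norm.aestronglyMeasurable
        measurable_snd.aemeasurable).mp h0
    have i3 : Integrable (fun p : Vec m × Vec m => ‖p.1 - p.2‖) γ := by
      refine (in1.add in2).mono'
        ((continuous_fst.sub continuous_snd).norm.aestronglyMeasurable) ?_
      refine Filter.Eventually.of_forall fun p => ?_
      rw [norm_norm]
      exact norm_sub_le _ _
    have e1 : ∫ ξ, f ξ ∂P = ∫ p, f p.1 ∂γ := by
      rw [← hγ1, integral_map measurable_fst.aemeasurable hcont.aestronglyMeasurable]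
    have e2 : ∫ ξ, f ξ ∂Q = ∫ p, f p.2 ∂γ := by
      rw [← hγ2, integral_map measurable_snd.aemeasurable hcont.aestronglyMeasurable]
    rw [e1, e2, ← integral_sub i1 i2]
    calc |∫ p, (f p.1 - f p.2) ∂γ| ≤ ∫ p, |f p.1 - f p.2| ∂γ := by simpa [Real.norm_eq_abs] using norm_integral_le_integral_norm (μ := γ) (fun p => f p.1 - f p.2)
      _ ≤ ∫ p, L * ‖p.1 - p.2‖ ∂γ := by
          exact integral_mono (i1.sub i2).abs (i3.const_mul L) fun p => hLip _ _
      _ = L * ∫ p, ‖p.1 - p.2‖ ∂γ := integral_const_mul _ _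
  -- nonemptiness via the product coupling
  have hne : S.Nonempty := by
    refine ⟨∫ p, ‖p.1 - p.2‖ ∂(P.prod Q), P.prod Q, ⟨inferInstance, ?_, ?_⟩, rfl⟩
    · simp [Measure.map_fst_prod]
    · simp [Measure.map_snd_prod]
  rcases eq_or_lt_of_le hL with hL0 | hLpos
  · obtain ⟨c, hc⟩ := hne
    have := key c hc
    rw [← hL0] at this ⊢
    simpa using this
  · rw [← div_le_iff₀' hLpos]
    refine le_csInf hne fun c hc => ?_
    rw [div_le_iff₀' hLpos]
    exact key c hc

lemma empMeas_prob {m N : ℕ} (hN : 0 < N) (xs : Fin N → Vec m) :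
    IsProbabilityMeasure (empMeas xs) := by
  constructor
  rw [empMeas, Measure.smul_apply, Measure.finset_sum_apply]
  simp only [Measure.dirac_apply' _ MeasurableSet.univ, Set.indicator_univ,
    Pi.one_apply, Finset.sum_const, Finset.card_univ, Fintype.card_fin, nsmul_eq_mul, mul_one,
    smul_eq_mul]
  exact ENNReal.inv_mul_cancel (by exact_mod_cast hN.ne') (ENNReal.natCast_ne_top N)

lemma integrable_dirac' {m : ℕ} (f : Vec m → ℝ) (hf : StronglyMeasurable f) (x : Vec m) :
    Integrable f (Measure.dirac x) := by
  refine ⟨hf.aestronglyMeasurable, ?_⟩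
  rw [HasFiniteIntegral, lintegral_dirac' _ hf.measurable.enorm]
  exact enorm_lt_top

lemma empMeas_integrable {m N : ℕ} (hN : 0 < N) (xs : Fin N → Vec m) (f : Vec m → ℝ)
    (hf : StronglyMeasurable f) : Integrable f (empMeas xs) := by
  rw [empMeas]
  refine Integrable.smul_measure ?_ (by simp [hN.ne'])
  rw [integrable_finset_sum_measure]
  exact fun i _ => integrable_dirac' f hf (xs i)

lemma continuous_aux (c₁ c₂ q : ℝ) (hq : 0 < q) :
    Continuous fun t : ℝ => c₁ * Real.exp (-(c₂ * t ^ q)) := by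
  have h1 : Continuous fun t : ℝ => t ^ q := by
    rw [continuous_iff_continuousAt]
    exact fun t => Real.continuousAt_rpow_const t q (Or.inr hq.le)
  fun_prop


lemma integrableOn_exp_poly (c₁ c₂ q : ℝ) (hc₁ : 0 ≤ c₁) (hc₂ : 0 < c₂) (hq : 1 ≤ q) :
    IntegrableOn (fun t => c₁ * Real.exp (-(c₂ * t ^ q))) (Ioi (0:ℝ)) := by
  have hcont := continuous_aux c₁ c₂ q (lt_of_lt_of_le one_pos hq)
  rw [← Ioc_union_Ioi_eq_Ioi (zero_le_one (α := ℝ))]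
  refine IntegrableOn.union ?_ ?_
  · -- bounded by c₁ on (0,1]
    refine Integrable.mono' (g := fun _ => c₁)
      (integrableOn_const measure_Ioc_lt_top.ne)
      hcont.aestronglyMeasurable ?_
    rw [ae_restrict_iff' measurableSet_Ioc]
    refine Filter.Eventually.of_forall fun t ht => ?_
    rw [Real.norm_eq_abs, abs_mul, abs_of_nonneg hc₁, abs_of_pos (Real.exp_pos _)]
    have h1 : 0 ≤ t ^ q := Real.rpow_nonneg ht.1.le q
    have : Real.exp (-(c₂ * t ^ q)) ≤ 1 := by
      rw [Real.exp_le_one_iff]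
      nlinarith
    nlinarith
  · -- bounded by c₁ * exp (-c₂ t) on (1,∞)
    have hbase : IntegrableOn (fun t => c₁ * Real.exp (-c₂ * t)) (Ioi (1:ℝ)) :=
      (exp_neg_integrableOn_Ioi 1 hc₂).const_mul c₁
    refine Integrable.mono' hbase hcont.aestronglyMeasurable ?_
    rw [ae_restrict_iff' measurableSet_Ioi]
    refine Filter.Eventually.of_forall fun t ht => ?_
    rw [Real.norm_eq_abs, abs_mul, abs_of_nonneg hc₁, abs_of_pos (Real.exp_pos _)]
    have ht1 : (1:ℝ) ≤ t := (le_of_lt ht)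
    have h1 : t ≤ t ^ q := by
      nth_rewrite 1 [← Real.rpow_one t]
      exact Real.rpow_le_rpow_of_exponent_le ht1 hq
    have : Real.exp (-(c₂ * t ^ q)) ≤ Real.exp (-c₂ * t) := by
      rw [Real.exp_le_exp]
      nlinarith
    nlinarith [Real.exp_pos (-c₂ * t)]

lemma tail_integral_sub (c₁ c₂ q : ℝ) (hc₁ : 0 ≤ c₁) (hc₂ : 0 < c₂) (hq : 1 ≤ q)
    (N : ℕ) (hN : 0 < N) :
    ∫ t in Ioi (0:ℝ), c₁ * Real.exp (-(c₂ * N * t ^ q)) =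
      (N : ℝ) ^ (-1/q) * ∫ t in Ioi (0:ℝ), c₁ * Real.exp (-(c₂ * t ^ q)) := by
  have hq0 : q ≠ 0 := by positivity
  have hNpos : (0:ℝ) < (N:ℝ) := by exact_mod_cast hN
  have hb : (0:ℝ) < (N:ℝ) ^ (1/q) := Real.rpow_pos_of_pos hNpos _
  have key := integral_comp_mul_left_Ioi (fun t => c₁ * Real.exp (-(c₂ * t ^ q))) 0 hb
  have heq : ∀ t ∈ Ioi (0:ℝ),
      c₁ * Real.exp (-(c₂ * ((N:ℝ) ^ (1/q) * t) ^ q)) = c₁ * Real.exp (-(c₂ * N * t ^ q)) := by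
    intro t ht
    rw [Real.mul_rpow hb.le (le_of_lt ht), ← Real.rpow_mul hNpos.le, one_div,
      inv_mul_cancel₀ hq0, Real.rpow_one, mul_assoc]
  rw [setIntegral_congr_fun measurableSet_Ioi heq] at key
  rw [key, mul_zero, smul_eq_mul]
  congr 1
  rw [← Real.rpow_neg_one ((N:ℝ) ^ (1/q)), ← Real.rpow_mul hNpos.le]
  congr 1
  ring


end AuxLemmas


set_option maxHeartbeats 1000000 in
/-- Theorem 3.2, expected generalization bound:
E[ E_{P*}[h(xhat_N,.)] - J* ] <= eps J* + (2+eps) L (C_p N^{-1/p} + C_a N^{-1/a}). -/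
theorem expected_generalization_bound {m N : ℕ} (hN : 0 < N)
    {X : Type*} [Nonempty X]
    {Ω : Type*} [MeasurableSpace Ω] (μ : Measure Ω) [IsProbabilityMeasure μ]
    (h : X → Vec m → ℝ) (L : ℝ) (hL : 0 ≤ L)
    (hLip : ∀ x ξ η, |h x ξ - h x η| ≤ L * ‖ξ - η‖)
    (hInt : ∀ x (P : Measure (Vec m)), IsProbabilityMeasure P →
      Integrable (fun ξ => ‖ξ‖) P → Integrable (h x) P)
    (Pstar : Measure (Vec m)) [IsProbabilityMeasure Pstar]
    (hPstarmom : Integrable (fun ξ => ‖ξ‖) Pstar)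
    -- i.i.d. samples from Pstar
    (ξs : Fin N → Ω → Vec m) (hmeas : ∀ i, Measurable (ξs i))
    (hindep : ProbabilityTheory.iIndepFun ξs μ)
    (hdist : ∀ i, μ.map (ξs i) = Pstar)
    -- empirical measure
    (Phat : Ω → Measure (Vec m)) (hPhat : ∀ ω, Phat ω = empMeas (fun i => ξs i ω))
    -- reference value
    (ε : ℝ) (hε : 0 < ε)
    (τ : Ω → ℝ) (hτ : ∀ ω, τ ω = (1 + ε) * ⨅ x, ∫ ξ, h x ξ ∂(Phat ω))
    (hfin : ∀ᵐ ω ∂μ, BddBelow (Set.range fun x => ∫ ξ, h x ξ ∂(Phat ω)))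
    (hfinPstar : BddBelow (Set.range fun x => ∫ ξ, h x ξ ∂Pstar))
    -- almost surely RS-feasible random pair
    (xhat : Ω → X) (khat : Ω → ℝ)
    (hfeas : ∀ᵐ ω ∂μ, RSFeasible h (Phat ω) (τ ω) (xhat ω) (khat ω))
    (hxhatmeas : Measurable fun ω => ∫ ξ, h (xhat ω) ξ ∂Pstar)
    -- two-regime concentration of D = d_W(Pstar, Phat_N)
    (c₁ c₂ a : ℝ) (hc₁ : 0 < c₁) (hc₂ : 0 < c₂) (ha : 1 < a)
    (hDmeas : Measurable fun ω => wDist Pstar (Phat ω))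
    (htail₁ : ∀ r : ℝ, 0 < r → r ≤ 1 →
      μ {ω | r ≤ wDist Pstar (Phat ω)} ≤
        ENNReal.ofReal (c₁ * Real.exp (-(c₂ * N * r ^ (max (m : ℝ) 2)))))
    (htail₂ : ∀ r : ℝ, 1 < r →
      μ {ω | r ≤ wDist Pstar (Phat ω)} ≤
        ENNReal.ofReal (c₁ * Real.exp (-(c₂ * N * r ^ a)))) :
    (∫ ω, ((∫ ξ, h (xhat ω) ξ ∂Pstar) - (⨅ x, ∫ ξ, h x ξ ∂Pstar)) ∂μ) ≤
      ε * (⨅ x, ∫ ξ, h x ξ ∂Pstar) + (2 + ε) * L *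
        ((∫ t in Set.Ioi (0 : ℝ), c₁ * Real.exp (-(c₂ * t ^ (max (m : ℝ) 2))))
            * (N : ℝ) ^ (-1 / (max (m : ℝ) 2))
          + (∫ t in Set.Ioi (0 : ℝ), c₁ * Real.exp (-(c₂ * t ^ a)))
            * (N : ℝ) ^ (-1 / a)) := by
  classical
  set p : ℝ := max (m : ℝ) 2 with hp
  set J := ⨅ x, ∫ ξ, h x ξ ∂Pstar with hJ
  set D := fun ω => wDist Pstar (Phat ω) with hD
  have hD0 : ∀ ω, 0 ≤ D ω := fun ω => wDist_nonneg _ _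
  have hp1 : (1:ℝ) ≤ p := le_trans one_le_two (le_max_right _ _)
  have ha1 : (1:ℝ) ≤ a := ha.le
  have hNpos : (0:ℝ) < N := by exact_mod_cast hN
  have hQprob : ∀ ω, IsProbabilityMeasure (Phat ω) := fun ω => by
    rw [hPhat]; exact empMeas_prob hN _
  have hQmom : ∀ ω, Integrable (fun ξ => ‖ξ‖) (Phat ω) := fun ω => by
    rw [hPhat]; exact empMeas_integrable hN _ _ continuous_norm.stronglyMeasurable
  have hJle : ∀ ω, J ≤ ∫ ξ, h (xhat ω) ξ ∂Pstar := fun ω => ciInf_le hfinPstar (xhat ω)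
  -- pointwise bound
  have hptwise : ∀ᵐ ω ∂μ,
      (∫ ξ, h (xhat ω) ξ ∂Pstar) - J ≤ ε * J + (2 + ε) * L * D ω := by
    filter_upwards [hfeas, hfin] with ω hfe hbb
    haveI := hQprob ω
    have hIPh : ∀ x, Integrable (h x) (Phat ω) := fun x => hInt x _ (hQprob ω) (hQmom ω)
    have hIPs : ∀ x, Integrable (h x) Pstar := fun x => hInt x _ inferInstance hPstarmom
    have step1 : (∫ ξ, h (xhat ω) ξ ∂(Phat ω)) ≤ τ ω := by
      have h2 := hfe.2 (Phat ω) (hQprob ω) (hQmom ω)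
      rw [wDist_self, mul_zero] at h2
      linarith
    have habs : ∀ x, |(∫ ξ, h x ξ ∂Pstar) - ∫ ξ, h x ξ ∂(Phat ω)| ≤ L * D ω := fun x =>
      wasserstein_transfer (h x) L hL (hLip x) Pstar (Phat ω) hPstarmom (hQmom ω)
        (hIPs x) (hIPh x)
    have step2 : (∫ ξ, h (xhat ω) ξ ∂Pstar) ≤ (∫ ξ, h (xhat ω) ξ ∂(Phat ω)) + L * D ω := by
      have := (abs_le.mp (habs (xhat ω))).2
      linarith
    have step3 : (⨅ x, ∫ ξ, h x ξ ∂(Phat ω)) ≤ J + L * D ω := by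
      have h4 : ∀ x, (⨅ x, ∫ ξ, h x ξ ∂(Phat ω)) - L * D ω ≤ ∫ ξ, h x ξ ∂Pstar := by
        intro x
        have h5 := ciInf_le hbb x
        have h6 := (abs_le.mp (habs x)).1
        linarith
      have h7 := le_ciInf h4
      rw [hJ]
      linarith
    have step4 : τ ω ≤ (1 + ε) * (J + L * D ω) := by
      rw [hτ]
      exact mul_le_mul_of_nonneg_left step3 (by linarith)
    have expand : (1 + ε) * (J + L * D ω) + L * D ω = ε * J + (2 + ε) * L * D ω + J := by ring
    linarith
  -- tail bound on the expected Wasserstein distance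
  set Ip := ∫ t in Set.Ioi (0:ℝ), c₁ * Real.exp (-(c₂ * t ^ p)) with hIp
  set Ia := ∫ t in Set.Ioi (0:ℝ), c₁ * Real.exp (-(c₂ * t ^ a)) with hIa
  have hIpnn : 0 ≤ Ip := setIntegral_nonneg measurableSet_Ioi fun t _ => by positivity
  have hIann : 0 ≤ Ia := setIntegral_nonneg measurableSet_Ioi fun t _ => by positivity
  have hc₂N : (0:ℝ) < c₂ * N := by positivity
  have hintP : IntegrableOn (fun t => c₁ * Real.exp (-(c₂ * N * t ^ p))) (Set.Ioi (0:ℝ)) :=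
    integrableOn_exp_poly c₁ (c₂ * N) p hc₁.le hc₂N hp1
  have hintA : IntegrableOn (fun t => c₁ * Real.exp (-(c₂ * N * t ^ a))) (Set.Ioi (0:ℝ)) :=
    integrableOn_exp_poly c₁ (c₂ * N) a hc₁.le hc₂N ha1
  have hofP : ENNReal.ofReal (∫ t in Set.Ioi (0:ℝ), c₁ * Real.exp (-(c₂ * N * t ^ p)))
      = ∫⁻ t in Set.Ioi (0:ℝ), ENNReal.ofReal (c₁ * Real.exp (-(c₂ * N * t ^ p))) :=
    ofReal_integral_eq_lintegral_ofReal hintP (Filter.Eventually.of_forall fun t => by positivity)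
  have hofA : ENNReal.ofReal (∫ t in Set.Ioi (0:ℝ), c₁ * Real.exp (-(c₂ * N * t ^ a)))
      = ∫⁻ t in Set.Ioi (0:ℝ), ENNReal.ofReal (c₁ * Real.exp (-(c₂ * N * t ^ a))) :=
    ofReal_integral_eq_lintegral_ofReal hintA (Filter.Eventually.of_forall fun t => by positivity)
  have hsubP := tail_integral_sub c₁ c₂ p hc₁.le hc₂ hp1 N hN
  have hsubA := tail_integral_sub c₁ c₂ a hc₁.le hc₂ ha1 N hN
  have hT : (∫⁻ t in Set.Ioi (0:ℝ), μ {ω | t ≤ D ω}) ≤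
      ENNReal.ofReal (Ip * (N:ℝ) ^ (-1/p)) + ENNReal.ofReal (Ia * (N:ℝ) ^ (-1/a)) := by
    rw [← Set.Ioc_union_Ioi_eq_Ioi (zero_le_one (α := ℝ)),
      lintegral_union measurableSet_Ioi Set.Ioc_disjoint_Ioi_same]
    refine add_le_add ?_ ?_
    · calc ∫⁻ t in Set.Ioc (0:ℝ) 1, μ {ω | t ≤ D ω}
          ≤ ∫⁻ t in Set.Ioc (0:ℝ) 1, ENNReal.ofReal (c₁ * Real.exp (-(c₂ * N * t ^ p))) := by
            refine setLIntegral_mono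
              (ENNReal.measurable_ofReal.comp (continuous_aux c₁ (c₂ * N) p
                (lt_of_lt_of_le one_pos hp1)).measurable) fun t ht => htail₁ t ht.1 ht.2
        _ ≤ ∫⁻ t in Set.Ioi (0:ℝ), ENNReal.ofReal (c₁ * Real.exp (-(c₂ * N * t ^ p))) :=
            lintegral_mono_set Set.Ioc_subset_Ioi_self
        _ = ENNReal.ofReal (Ip * (N:ℝ) ^ (-1/p)) := by
            rw [← hofP, hsubP, mul_comm]
    · calc ∫⁻ t in Set.Ioi (1:ℝ), μ {ω | t ≤ D ω}
          ≤ ∫⁻ t in Set.Ioi (1:ℝ), ENNReal.ofReal (c₁ * Real.exp (-(c₂ * N * t ^ a))) := by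
            refine setLIntegral_mono
              (ENNReal.measurable_ofReal.comp (continuous_aux c₁ (c₂ * N) a
                (lt_of_lt_of_le one_pos ha1)).measurable) fun t ht => htail₂ t ht
        _ ≤ ∫⁻ t in Set.Ioi (0:ℝ), ENNReal.ofReal (c₁ * Real.exp (-(c₂ * N * t ^ a))) :=
            lintegral_mono_set (Set.Ioi_subset_Ioi zero_le_one)
        _ = ENNReal.ofReal (Ia * (N:ℝ) ^ (-1/a)) := by
            rw [← hofA, hsubA, mul_comm]
  have layer := lintegral_eq_lintegral_meas_le μ
    (Filter.Eventually.of_forall hD0) hDmeas.aemeasurable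
  have hRHSne : ENNReal.ofReal (Ip * (N:ℝ) ^ (-1/p)) + ENNReal.ofReal (Ia * (N:ℝ) ^ (-1/a)) ≠ ⊤ :=
    (ENNReal.add_lt_top.mpr ⟨ENNReal.ofReal_lt_top, ENNReal.ofReal_lt_top⟩).ne
  have hDint : Integrable D μ := by
    refine ⟨hDmeas.aestronglyMeasurable, ?_⟩
    rw [hasFiniteIntegral_iff_ofReal (Filter.Eventually.of_forall hD0), layer]
    exact lt_of_le_of_lt hT hRHSne.lt_top
  have hEDle : ∫ ω, D ω ∂μ ≤ Ip * (N:ℝ) ^ (-1/p) + Ia * (N:ℝ) ^ (-1/a) := by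
    rw [integral_eq_lintegral_of_nonneg_ae (Filter.Eventually.of_forall hD0)
      hDmeas.aestronglyMeasurable, layer]
    calc (∫⁻ t in Set.Ioi (0:ℝ), μ {ω | t ≤ D ω}).toReal
        ≤ (ENNReal.ofReal (Ip * (N:ℝ) ^ (-1/p)) + ENNReal.ofReal (Ia * (N:ℝ) ^ (-1/a))).toReal :=
          ENNReal.toReal_mono hRHSne hT
      _ = Ip * (N:ℝ) ^ (-1/p) + Ia * (N:ℝ) ^ (-1/a) := by
          rw [ENNReal.toReal_add ENNReal.ofReal_ne_top ENNReal.ofReal_ne_top,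
            ENNReal.toReal_ofReal (mul_nonneg hIpnn (Real.rpow_nonneg hNpos.le _)),
            ENNReal.toReal_ofReal (mul_nonneg hIann (Real.rpow_nonneg hNpos.le _))]
  -- assemble
  have hbdd_int : Integrable (fun ω => ε * J + (2 + ε) * L * D ω) μ :=
    (integrable_const _).add (hDint.const_mul _)
  have hgint : Integrable (fun ω => (∫ ξ, h (xhat ω) ξ ∂Pstar) - J) μ := by
    refine hbdd_int.mono' (hxhatmeas.sub measurable_const).aestronglyMeasurable ?_
    filter_upwards [hptwise] with ω hω
    rw [Real.norm_eq_abs, abs_of_nonneg (by linarith [hJle ω])]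
    exact hω
  have h2εL : 0 ≤ (2 + ε) * L := mul_nonneg (by linarith) hL
  calc ∫ ω, ((∫ ξ, h (xhat ω) ξ ∂Pstar) - J) ∂μ
      ≤ ∫ ω, (ε * J + (2 + ε) * L * D ω) ∂μ := integral_mono_ae hgint hbdd_int hptwise
    _ = ε * J + (2 + ε) * L * ∫ ω, D ω ∂μ := by
        rw [integral_add (integrable_const _) (hDint.const_mul _), integral_const,
          integral_const_mul]
        simp
    _ ≤ ε * J + (2 + ε) * L * (Ip * (N:ℝ) ^ (-1/p) + Ia * (N:ℝ) ^ (-1/a)) := by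
        have := mul_le_mul_of_nonneg_left hEDle h2εL
        linarith
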